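/- arXiv:1410.0939 — 3 statements merged into one kernel-verified Lean document; each statement's English description precedes it below -/
import Mathlib

section
/- (Heine–Szegő identity.) Let n ≥ 1 and let f : [0,2π) → ℂ be integrable. Then E_n[∏_{p=1}^n f(θ_p)] = D_{n−1}(f), where D_{n−1}(f) is the determinant of the n×n Toeplitz matrix whose (j,k) entry (0 ≤ j,k ≤ n−1) is the Fourier coefficient f_{j−k}. -/
open MeasureTheory Filter Finset

noncomputable section

/-- `ee x = exp(i x)`. -/
def ee (x : ℝ) : ℂ := Complex.exp (Complex.I * x)

/-- Squared Vandermonde weight `∏_{k<j} |e^{iθ_k} - e^{iθ_j}|²`. -/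
def weyl (n : ℕ) (θ : Fin n → ℝ) : ℝ :=
  ∏ p ∈ Finset.univ.filter (fun p : Fin n × Fin n => p.1 < p.2),
    ‖ee (θ p.1) - ee (θ p.2)‖ ^ 2

/-- CUE eigenvalue expectation `E_n[F]` for complex-valued `F`. -/
def cueEC (n : ℕ) (F : (Fin n → ℝ) → ℂ) : ℂ :=
  ((n.factorial : ℂ) * (2 * Real.pi : ℂ) ^ n)⁻¹ *
    ∫ θ in Set.univ.pi (fun _ : Fin n => Set.Ico (0:ℝ) (2 * Real.pi)), F θ * (weyl n θ : ℂ)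

/-- Fourier coefficient `f_m = (1/2π) ∫_0^{2π} f(φ) e^{-imφ} dφ`. -/
def fCoeff (f : ℝ → ℂ) (m : ℤ) : ℂ :=
  ((2 * Real.pi : ℝ) : ℂ)⁻¹ *
    ∫ φ in Set.Ico (0:ℝ) (2 * Real.pi), f φ * Complex.exp (-Complex.I * m * φ)

/-- The Toeplitz determinant `D_{n-1}(f)`: determinant of the `n × n` matrix with
`(j,k)` entry `f_{j-k}`. -/
def toeplitzDet (n : ℕ) (f : ℝ → ℂ) : ℂ :=
  Matrix.det (Matrix.of fun j k : Fin n => fCoeff f ((j : ℤ) - (k : ℤ)))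

lemma pi_integral {n : ℕ} (μ : Measure ℝ) [SigmaFinite μ] (g : Fin n → ℝ → ℂ) :
    ∫ x : Fin n → ℝ, ∏ i, g i (x i) ∂(Measure.pi fun _ => μ) = ∏ i, ∫ x, g i x ∂μ := by
  letI : MeasureSpace ℝ := ⟨μ⟩
  exact MeasureTheory.integral_fintype_prod_eq_prod g

lemma pi_integrable {n : ℕ} (μ : Measure ℝ) [SigmaFinite μ] (g : Fin n → ℝ → ℂ)
    (hg : ∀ i, Integrable (g i) μ) :
    Integrable (fun x : Fin n → ℝ => ∏ i, g i (x i)) (Measure.pi fun _ => μ) := by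
  letI : MeasureSpace ℝ := ⟨μ⟩
  exact MeasureTheory.Integrable.fintype_prod hg


def E' (m : ℤ) (φ : ℝ) : ℂ := Complex.exp (((m * φ : ℝ) : ℂ) * Complex.I)

lemma E'_norm (m : ℤ) (φ : ℝ) : ‖E' m φ‖ = 1 :=
  Complex.norm_exp_ofReal_mul_I _

lemma ee_pow_mul_conj_pow (φ : ℝ) (a b : ℕ) :
    ee φ ^ a * (starRingEnd ℂ) (ee φ) ^ b = E' ((a : ℤ) - b) φ := by
  have h1 : ee φ = Complex.exp ((φ : ℂ) * Complex.I) := by rw [ee, mul_comm]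
  have h2 : (starRingEnd ℂ) (ee φ) = Complex.exp ((-φ : ℝ) * Complex.I) := by
    rw [h1, ← Complex.exp_conj]
    congr 1
    simp [Complex.conj_ofReal]
  rw [h1]
  rw [show (starRingEnd ℂ) (Complex.exp ((φ : ℂ) * Complex.I)) = Complex.exp ((-φ : ℝ) * Complex.I) from h1 ▸ h2]
  rw [← Complex.exp_nat_mul, ← Complex.exp_nat_mul, ← Complex.exp_add, E']
  congr 1
  push_cast
  ring


lemma integrable_mul_E' {f : ℝ → ℂ} (hf : IntegrableOn f (Set.Ico (0:ℝ) (2 * Real.pi))) (m : ℤ) :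
    Integrable (fun φ => f φ * E' m φ) (volume.restrict (Set.Ico (0:ℝ) (2 * Real.pi))) := by
  have : Integrable (fun φ => E' m φ * f φ) (volume.restrict (Set.Ico (0:ℝ) (2 * Real.pi))) := by
    refine Integrable.bdd_mul hf ?_ (Filter.Eventually.of_forall fun x => le_of_eq (E'_norm m x))
    exact (Complex.continuous_exp.comp (by continuity)).aestronglyMeasurable
  simpa [mul_comm] using this

lemma integral_mul_E' {f : ℝ → ℂ} (m : ℤ) :
    ∫ φ in Set.Ico (0:ℝ) (2 * Real.pi), f φ * E' m φ = (2 * Real.pi : ℝ) * fCoeff f (-m) := by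
  rw [fCoeff]
  rw [← mul_assoc]
  rw [mul_inv_cancel₀ (by push_cast [Real.pi_ne_zero]; norm_num [Real.pi_ne_zero] : ((2 * Real.pi : ℝ) : ℂ) ≠ 0), one_mul]
  refine integral_congr_ae (Filter.Eventually.of_forall fun φ => ?_)
  simp only [E']
  congr 2
  push_cast
  ring


lemma prod_pairs {n : ℕ} (F : Fin n → Fin n → ℂ) :
    ∏ p ∈ Finset.univ.filter (fun p : Fin n × Fin n => p.1 < p.2), F p.1 p.2
      = ∏ i : Fin n, ∏ j ∈ Finset.Ioi i, F i j := by
  rw [← Finset.prod_sigma Finset.univ (fun i => Finset.Ioi i) (fun x => F x.1 x.2)]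
  refine Finset.prod_bij' (fun p _ => (⟨p.1, p.2⟩ : Σ _ : Fin n, Fin n))
    (fun x _ => (x.1, x.2)) ?_ ?_ ?_ ?_ ?_ <;> simp [Finset.mem_sigma, Finset.mem_Ioi]

lemma weyl_eq {n : ℕ} (θ : Fin n → ℝ) :
    ((weyl n θ : ℝ) : ℂ)
      = (Matrix.vandermonde fun k => ee (θ k)).det
        * (starRingEnd ℂ) ((Matrix.vandermonde fun k => ee (θ k)).det) := by
  have key : ∀ z : ℂ, ((‖z‖ : ℝ) : ℂ) ^ 2 = z * (starRingEnd ℂ) z := by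
    intro z
    rw [Complex.mul_conj, ← Complex.sq_norm]
    push_cast
    ring
  have step1 : ((weyl n θ : ℝ) : ℂ)
      = ∏ p ∈ Finset.univ.filter (fun p : Fin n × Fin n => p.1 < p.2),
          ((ee (θ p.2) - ee (θ p.1)) * (starRingEnd ℂ) (ee (θ p.2) - ee (θ p.1))) := by
    rw [weyl, Complex.ofReal_prod]
    refine Finset.prod_congr rfl fun p _ => ?_
    rw [Complex.ofReal_pow, key, ← neg_sub (ee (θ p.2)) (ee (θ p.1)), map_neg, neg_mul_neg]
  rw [step1, Finset.prod_mul_distrib, ← map_prod,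
    prod_pairs (fun i j => ee (θ j) - ee (θ i)), Matrix.det_vandermonde]

lemma det_expand {n : ℕ} (v : Fin n → ℂ) :
    (Matrix.vandermonde v).det
      = ∑ σ : Equiv.Perm (Fin n),
          ((Equiv.Perm.sign σ : ℤ) : ℂ) * ∏ k, v k ^ ((σ k : Fin n) : ℕ) := by
  rw [← Matrix.det_transpose, Matrix.det_apply]
  refine Finset.sum_congr rfl fun σ _ => ?_
  simp [Matrix.vandermonde, Units.smul_def, zsmul_eq_mul]

lemma conj_det_expand {n : ℕ} (v : Fin n → ℂ) :
    (starRingEnd ℂ) (Matrix.vandermonde v).det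
      = ∑ τ : Equiv.Perm (Fin n),
          ((Equiv.Perm.sign τ : ℤ) : ℂ) * ∏ k, ((starRingEnd ℂ) (v k)) ^ ((τ k : Fin n) : ℕ) := by
  rw [det_expand, map_sum]
  refine Finset.sum_congr rfl fun σ _ => ?_
  rw [map_mul, map_prod]
  simp


lemma toeplitz_expand (n : ℕ) (f : ℝ → ℂ) :
    toeplitzDet n f = ∑ π : Equiv.Perm (Fin n),
        ((Equiv.Perm.sign π : ℤ) : ℂ) * ∏ k, fCoeff f ((π k : ℤ) - (k : ℤ)) := by
  rw [toeplitzDet, Matrix.det_apply]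
  refine Finset.sum_congr rfl fun σ _ => ?_
  simp [Units.smul_def, zsmul_eq_mul]

lemma sum_sum_eq (n : ℕ) (f : ℝ → ℂ) :
    (∑ σ : Equiv.Perm (Fin n), ∑ τ : Equiv.Perm (Fin n),
        ((Equiv.Perm.sign σ : ℤ) : ℂ) * ((Equiv.Perm.sign τ : ℤ) : ℂ)
          * ∏ k, fCoeff f ((τ k : ℤ) - (σ k : ℤ)))
      = (n.factorial : ℂ) * toeplitzDet n f := by
  have inner : ∀ σ : Equiv.Perm (Fin n),
      (∑ τ : Equiv.Perm (Fin n),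
        ((Equiv.Perm.sign σ : ℤ) : ℂ) * ((Equiv.Perm.sign τ : ℤ) : ℂ)
          * ∏ k, fCoeff f ((τ k : ℤ) - (σ k : ℤ))) = toeplitzDet n f := by
    intro σ
    rw [toeplitz_expand]
    rw [← Equiv.sum_comp (Equiv.mulRight σ)]
    refine Finset.sum_congr rfl fun π _ => ?_
    have h1 : ∏ k, fCoeff f ((((π * σ) k : Fin n) : ℤ) - (σ k : ℤ))
        = ∏ k, fCoeff f ((π k : ℤ) - (k : ℤ)) := by
      have := Equiv.prod_comp σ (fun j => fCoeff f ((π j : ℤ) - (j : ℤ)))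
      simpa using this
    simp only [Equiv.coe_mulRight, h1]
    have hsgn : ((Equiv.Perm.sign σ : ℤ) : ℂ) * ((Equiv.Perm.sign (π * σ) : ℤ) : ℂ)
        = ((Equiv.Perm.sign π : ℤ) : ℂ) := by
      rw [map_mul]
      push_cast
      rcases Int.units_eq_one_or (Equiv.Perm.sign σ) with h | h <;>
        rcases Int.units_eq_one_or (Equiv.Perm.sign π) with h' | h' <;>
        simp [h, h']
    rw [hsgn]
  rw [Finset.sum_congr rfl fun σ _ => inner σ, Finset.sum_const, Finset.card_univ,
    Fintype.card_perm, Fintype.card_fin, nsmul_eq_mul]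


lemma integrand_eq {n : ℕ} (f : ℝ → ℂ) (θ : Fin n → ℝ) :
    (∏ p : Fin n, f (θ p)) * (weyl n θ : ℂ)
      = ∑ st : Equiv.Perm (Fin n) × Equiv.Perm (Fin n),
          (((Equiv.Perm.sign st.1 : ℤ) : ℂ) * ((Equiv.Perm.sign st.2 : ℤ) : ℂ))
            * ∏ k, (f (θ k) * E' ((st.1 k : ℤ) - (st.2 k : ℤ)) (θ k)) := by
  rw [weyl_eq, conj_det_expand, det_expand, Finset.sum_mul_sum, Fintype.sum_prod_type]
  rw [Finset.mul_sum]
  refine Finset.sum_congr rfl fun σ _ => ?_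
  rw [Finset.mul_sum]
  refine Finset.sum_congr rfl fun τ _ => ?_
  have : (∏ p : Fin n, f (θ p)) * ((∏ k, ee (θ k) ^ ((σ k : Fin n) : ℕ))
        * ∏ k, ((starRingEnd ℂ) (ee (θ k))) ^ ((τ k : Fin n) : ℕ))
      = ∏ k, (f (θ k) * E' ((σ k : ℤ) - (τ k : ℤ)) (θ k)) := by
    rw [← Finset.prod_mul_distrib, ← Finset.prod_mul_distrib]
    refine Finset.prod_congr rfl fun k _ => ?_
    rw [ee_pow_mul_conj_pow]
  rw [← this]
  ring


/-- Heine–Szegő identity. -/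
theorem heine_szego (n : ℕ) (hn : 1 ≤ n) (f : ℝ → ℂ)
    (hf : IntegrableOn f (Set.Ico (0:ℝ) (2 * Real.pi))) :
    cueEC n (fun θs => ∏ p : Fin n, f (θs p)) = toeplitzDet n f := by
  classical
  set S : Set ℝ := Set.Ico (0:ℝ) (2 * Real.pi) with hS
  set μ : Measure ℝ := volume.restrict S with hμ
  have hrestrict : (volume : Measure (Fin n → ℝ)).restrict (Set.univ.pi fun _ => S)
      = Measure.pi (fun _ : Fin n => μ) := by
    refine (Measure.pi_eq fun t ht => ?_).symm
    rw [Measure.restrict_apply (MeasurableSet.univ_pi ht), ← Set.pi_inter_distrib,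
      volume_pi, Measure.pi_pi]
    exact Finset.prod_congr rfl fun i _ => (Measure.restrict_apply (ht i)).symm
  have hI : ∀ m : ℤ, Integrable (fun φ => f φ * E' m φ) μ := integrable_mul_E' hf
  have key : (∫ θ in Set.univ.pi (fun _ : Fin n => S),
        (∏ p : Fin n, f (θ p)) * (weyl n θ : ℂ))
      = ((2 * Real.pi : ℝ) : ℂ) ^ n * ((n.factorial : ℂ) * toeplitzDet n f) := by
    rw [show (∫ θ in Set.univ.pi (fun _ : Fin n => S),
          (∏ p : Fin n, f (θ p)) * (weyl n θ : ℂ))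
        = ∫ θ, (∏ p : Fin n, f (θ p)) * (weyl n θ : ℂ) ∂(Measure.pi fun _ : Fin n => μ) by
      rw [← hrestrict]]
    calc
      (∫ θ, (∏ p : Fin n, f (θ p)) * (weyl n θ : ℂ) ∂(Measure.pi fun _ : Fin n => μ))
          = ∫ θ, (∑ st : Equiv.Perm (Fin n) × Equiv.Perm (Fin n),
              (((Equiv.Perm.sign st.1 : ℤ) : ℂ) * ((Equiv.Perm.sign st.2 : ℤ) : ℂ))
                * ∏ k, (f (θ k) * E' ((st.1 k : ℤ) - (st.2 k : ℤ)) (θ k)))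
              ∂(Measure.pi fun _ : Fin n => μ) := by
        refine integral_congr_ae (Filter.Eventually.of_forall fun θ => ?_)
        exact integrand_eq f θ
      _ = ∑ st : Equiv.Perm (Fin n) × Equiv.Perm (Fin n),
            ∫ θ, (((Equiv.Perm.sign st.1 : ℤ) : ℂ) * ((Equiv.Perm.sign st.2 : ℤ) : ℂ))
              * ∏ k, (f (θ k) * E' ((st.1 k : ℤ) - (st.2 k : ℤ)) (θ k))
              ∂(Measure.pi fun _ : Fin n => μ) := by
        refine integral_finset_sum _ fun st _ => ?_
        exact (pi_integrable μ _ (fun k => hI _)).const_mul _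
      _ = ∑ st : Equiv.Perm (Fin n) × Equiv.Perm (Fin n),
            (((Equiv.Perm.sign st.1 : ℤ) : ℂ) * ((Equiv.Perm.sign st.2 : ℤ) : ℂ))
              * (((2 * Real.pi : ℝ) : ℂ) ^ n
                * ∏ k, fCoeff f ((st.2 k : ℤ) - (st.1 k : ℤ))) := by
        refine Finset.sum_congr rfl fun st _ => ?_
        rw [MeasureTheory.integral_const_mul]
        congr 1
        rw [pi_integral μ (fun k φ => f φ * E' ((st.1 k : ℤ) - (st.2 k : ℤ)) φ)]
        have : ∀ k : Fin n, (∫ x, f x * E' ((st.1 k : ℤ) - (st.2 k : ℤ)) x ∂μ)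
            = ((2 * Real.pi : ℝ) : ℂ) * fCoeff f ((st.2 k : ℤ) - (st.1 k : ℤ)) := by
          intro k
          rw [hμ, hS]
          rw [integral_mul_E']
          congr 2
          ring
        rw [Finset.prod_congr rfl fun k _ => this k, Finset.prod_mul_distrib,
          Finset.prod_const, Finset.card_univ, Fintype.card_fin]
      _ = ((2 * Real.pi : ℝ) : ℂ) ^ n * ((n.factorial : ℂ) * toeplitzDet n f) := by
        rw [← sum_sum_eq n f, Fintype.sum_prod_type, Finset.mul_sum]
        refine Finset.sum_congr rfl fun σ _ => ?_
        rw [Finset.mul_sum]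
        exact Finset.sum_congr rfl fun τ _ => by ring
  rw [cueEC, key]
  have h2pi : ((2 * Real.pi : ℝ) : ℂ) ≠ 0 :=
    Complex.ofReal_ne_zero.mpr (by positivity)
  have hfac : (n.factorial : ℂ) ≠ 0 := Nat.cast_ne_zero.mpr n.factorial_ne_zero
  have hcast : (2 * Real.pi : ℂ) = ((2 * Real.pi : ℝ) : ℂ) := by push_cast; ring
  rw [hcast]
  rw [inv_mul_eq_iff_eq_mul₀ (mul_ne_zero hfac (pow_ne_zero _ h2pi))]
  ring


end
end

section
/- For every x ∈ ℝ with x/(2π) ∉ ℤ, the series Σ_{j=1}^∞ cos(jx)/j converges and Σ_{j=1}^∞ cos(jx)/j = −log|1 − e^{ix}|. Equivalently, for θ, θ' ∈ ℝ with (θ−θ')/(2π) ∉ ℤ, (1/2) Σ_{j=1}^∞ cos(j(θ−θ'))/j = −(1/2) log|e^{iθ} − e^{iθ'}|. -/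
open Filter Finset

noncomputable section

open Complex in
/-- Key lemma: for `z` on the unit circle, `z ≠ 1`, the series `∑ z^(i+1)/(i+1)` converges
to `-log (1 - z)`. -/
lemma key_tendsto {z : ℂ} (hz1 : ‖z‖ = 1) (hz : z ≠ 1) :
    Tendsto (fun N : ℕ => ∑ i ∈ range N, z ^ (i + 1) / ((i : ℂ) + 1))
      atTop (nhds (-Complex.log (1 - z))) := by
  have hzne : z - 1 ≠ 0 := sub_ne_zero.mpr hz
  have habs : (0 : ℝ) < ‖z - 1‖ := by
    simpa using (norm_pos_iff.mpr hzne)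
  -- Dirichlet's test: Cauchy sequence
  have hb : ∀ n : ℕ, ‖∑ i ∈ range n, z ^ (i + 1)‖ ≤ 2 / ‖z - 1‖ := by
    intro n
    have h1 : ∑ i ∈ range n, z ^ (i + 1) = z * ((z ^ n - 1) / (z - 1)) := by
      rw [← geom_sum_eq hz, Finset.mul_sum]
      exact Finset.sum_congr rfl fun i _ => by ring
    rw [h1]
    have h2 : ‖z * ((z ^ n - 1) / (z - 1))‖ = ‖z ^ n - 1‖ / ‖z - 1‖ := by
      rw [norm_mul, norm_div]
      simp only [hz1, one_mul]
    rw [h2]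
    gcongr
    calc ‖z ^ n - 1‖ ≤ ‖z ^ n‖ + ‖(1 : ℂ)‖ := norm_sub_le _ _
      _ = 2 := by simp [norm_pow, hz1]; norm_num
  have hanti : Antitone (fun n : ℕ => ((n : ℝ) + 1)⁻¹) := by
    intro a b h
    have ha : (0 : ℝ) < (a : ℝ) + 1 := by positivity
    apply inv_anti₀ ha
    have : (a : ℝ) ≤ b := Nat.cast_le.mpr h
    linarith
  have hf0 : Tendsto (fun n : ℕ => ((n : ℝ) + 1)⁻¹) atTop (nhds 0) := by
    simpa [one_div] using (tendsto_one_div_add_atTop_nhds_zero_nat :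
      Tendsto (fun n : ℕ => 1 / ((n : ℝ) + 1)) atTop (nhds 0))
  have hC : CauchySeq (fun n : ℕ =>
      ∑ i ∈ range n, ((i : ℝ) + 1)⁻¹ • z ^ (i + 1)) :=
    hanti.cauchySeq_series_mul_of_tendsto_zero_of_bounded hf0 hb
  have hCeq : (fun n : ℕ => ∑ i ∈ range n, ((i : ℝ) + 1)⁻¹ • z ^ (i + 1)) =
      fun n : ℕ => ∑ i ∈ range n, z ^ (i + 1) / ((i : ℂ) + 1) := by
    funext n
    refine Finset.sum_congr rfl fun i _ => ?_
    rw [Complex.real_smul]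
    push_cast
    rw [div_eq_inv_mul]
  rw [hCeq] at hC
  obtain ⟨L, hL⟩ := cauchySeq_tendsto_of_complete hC
  -- Abel's limit theorem to identify L
  set F : ℕ → ℂ := fun n => z ^ n / n with hF
  have hFs : Tendsto (fun N : ℕ => ∑ i ∈ range N, F i) atTop (nhds L) := by
    rw [← tendsto_add_atTop_iff_nat 1]
    have : (fun N : ℕ => ∑ i ∈ range (N + 1), F i) =
        fun N : ℕ => ∑ i ∈ range N, z ^ (i + 1) / ((i : ℂ) + 1) := by
      funext N
      rw [Finset.sum_range_succ']
      simp only [hF]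
      push_cast
      simp
    rw [this]
    exact hL
  have habel := Complex.tendsto_tsum_powerSeries_nhdsWithin_lt hFs
  rw [tendsto_map'_iff] at habel
  -- the auxiliary function equals -log(1 - t z) for t ∈ (0,1)
  have hslit : (1 : ℂ) - z ∈ Complex.slitPlane := by
    rw [Complex.mem_slitPlane_iff]
    by_contra hcon
    push_neg at hcon
    obtain ⟨h1, h2⟩ := hcon
    have him : z.im = 0 := by
      have : (1 - z).im = -z.im := by simp
      rw [this] at h2
      linarith
    have hre : 1 ≤ z.re := by
      have : (1 - z).re = 1 - z.re := by simp
      rw [this] at h1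
      linarith
    have : ‖z‖ = |z.re| := by
      rw [Complex.norm_def, Complex.normSq_apply, him]
      rw [← Real.sqrt_sq_eq_abs]
      ring_nf
    rw [hz1] at this
    have hre1 : z.re = 1 := by
      rcases abs_cases z.re with ⟨h, _⟩ | ⟨h, _⟩ <;> linarith
    exact hz (Complex.ext hre1 him)
  have hlog : Tendsto (fun t : ℝ => -Complex.log (1 - (t : ℂ) * z)) (nhdsWithin 1 (Set.Iio 1))
      (nhds (-Complex.log (1 - z))) := by
    have hcont : ContinuousAt (fun t : ℝ => -Complex.log (1 - (t : ℂ) * z)) 1 := by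
      have h1 : ContinuousAt (fun t : ℝ => (1 : ℂ) - (t : ℂ) * z) 1 := by fun_prop
      exact ((continuousAt_clog (by simpa using hslit)).comp h1).neg
    have := hcont.continuousWithinAt (s := Set.Iio 1)
    simpa using this.tendsto
  have hEq : (fun t : ℝ => ∑' n, F n * (t : ℂ) ^ n) =ᶠ[nhdsWithin 1 (Set.Iio 1)]
      fun t : ℝ => -Complex.log (1 - (t : ℂ) * z) := by
    filter_upwards [Ioo_mem_nhdsLT_of_mem (show (1:ℝ) ∈ Set.Ioc 0 1 by norm_num)] with t ht
    have htz : ‖(t : ℂ) * z‖ < 1 := by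
      rw [norm_mul, hz1, mul_one,
        Complex.norm_real, Real.norm_eq_abs]
      rw [abs_of_pos ht.1]
      exact ht.2
    have hs := Complex.hasSum_taylorSeries_neg_log htz
    have : (fun n : ℕ => ((t : ℂ) * z) ^ n / n) = fun n : ℕ => F n * (t : ℂ) ^ n := by
      funext n
      simp only [hF, mul_pow]
      ring
    rw [this] at hs
    exact hs.tsum_eq
  have hL2 : Tendsto (fun t : ℝ => -Complex.log (1 - (t : ℂ) * z)) (nhdsWithin 1 (Set.Iio 1))
      (nhds L) := habel.congr' hEq
  have : L = -Complex.log (1 - z) := tendsto_nhds_unique hL2 hlog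
  rwa [this] at hL

/-- The first part, for a single `x`. -/
lemma cos_part (x : ℝ) (hx : ∀ m : ℤ, x ≠ 2 * Real.pi * m) :
    Tendsto (fun N : ℕ => ∑ j ∈ Finset.Icc 1 N, Real.cos (j * x) / j)
      atTop (nhds (-Real.log (‖1 - ee x‖))) := by
  set z : ℂ := ee x with hzdef
  have hz1 : ‖z‖ = 1 := by
    rw [hzdef, ee, Complex.norm_exp]
    norm_num [Complex.mul_re]
  have hzne : z ≠ 1 := by
    intro h
    rw [hzdef, ee, Complex.exp_eq_one_iff] at h
    obtain ⟨n, hn⟩ := h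
    have : (x : ℂ) = ((2 * Real.pi * n : ℝ) : ℂ) := by
      have hI : Complex.I ≠ 0 := Complex.I_ne_zero
      field_simp at hn ⊢
      have : Complex.I * x = Complex.I * (2 * Real.pi * n) := by
        rw [hn]; push_cast; ring
      exact mul_left_cancel₀ hI (by push_cast; exact this)
    exact hx n (by exact_mod_cast this)
  have h := key_tendsto hz1 hzne
  have hre := (Complex.continuous_re.tendsto _).comp h
  have hre_lim : (-Complex.log (1 - z)).re = -Real.log ‖1 - z‖ := by
    rw [Complex.neg_re, Complex.log_re]
  rw [hre_lim] at hre
  convert hre using 2 with N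
  rw [Function.comp_apply, Complex.re_sum]
  rw [← Finset.Ico_add_one_right_eq_Icc, Finset.sum_Ico_eq_sum_range]
  refine Finset.sum_congr rfl fun i _ => ?_
  have hzpow : z ^ (i + 1) = Complex.exp ((((i : ℝ) + 1) * x : ℝ) * Complex.I) := by
    rw [hzdef, ee, ← Complex.exp_nat_mul]
    push_cast
    ring_nf
  rw [hzpow]
  have : (Complex.exp ((((i : ℝ) + 1) * x : ℝ) * Complex.I) / ((i : ℂ) + 1)).re
      = (Complex.exp ((((i : ℝ) + 1) * x : ℝ) * Complex.I)).re / ((i : ℝ) + 1) := by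
    have h1 : ((i : ℂ) + 1) = ((i + 1 : ℕ) : ℂ) := by push_cast; ring
    rw [h1, Complex.div_natCast_re]
    push_cast
    ring
  rw [this, Complex.exp_ofReal_mul_I_re]
  push_cast
  ring_nf

theorem cos_series_eq_neg_log :
    (∀ x : ℝ, (∀ m : ℤ, x ≠ 2 * Real.pi * m) →
      Tendsto (fun N : ℕ => ∑ j ∈ Finset.Icc 1 N, Real.cos (j * x) / j)
        atTop (nhds (-Real.log (‖1 - ee x‖)))) ∧
    (∀ θ θ' : ℝ, (∀ m : ℤ, θ - θ' ≠ 2 * Real.pi * m) →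
      Tendsto (fun N : ℕ => (1/2) * ∑ j ∈ Finset.Icc 1 N, Real.cos (j * (θ - θ')) / j)
        atTop (nhds (-(1/2) * Real.log (‖ee θ - ee θ'‖)))) := by
  constructor
  · exact cos_part
  · intro θ θ' hθ
    have h := cos_part (θ - θ') hθ
    have habs : ‖ee θ - ee θ'‖ = ‖1 - ee (θ - θ')‖ := by
      have hfac : ee θ - ee θ' = -(ee θ' * (1 - ee (θ - θ'))) := by
        rw [ee, ee, ee]
        rw [mul_sub, mul_one, ← Complex.exp_add]
        push_cast
        ring_nf
      rw [hfac, norm_neg, norm_mul]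
      have : ‖ee θ'‖ = 1 := by
        rw [ee, Complex.norm_exp]
        norm_num [Complex.mul_re]
      rw [this, one_mul]
    rw [habs]
    have := h.const_mul (1/2 : ℝ)
    convert this using 2
    ring

end
end

section
/- For every x ∈ (0, 2π), the series Σ_{j=1}^∞ sin(jx)/j converges and Σ_{j=1}^∞ sin(jx)/j = (π − x)/2. -/
open Filter Finset
open scoped Topology

theorem sin_series_eq (x : ℝ) (hx : x ∈ Set.Ioo (0:ℝ) (2 * Real.pi)) :
    Tendsto (fun N : ℕ => ∑ j ∈ Finset.Icc 1 N, Real.sin (j * x) / j)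
      atTop (nhds ((Real.pi - x) / 2)) := by
  obtain ⟨hx0, hx2⟩ := hx
  set z : ℂ := Complex.exp (x * Complex.I) with hzdef
  have hs : 0 < Real.sin (x / 2) :=
    Real.sin_pos_of_pos_of_lt_pi (by linarith) (by linarith)
  have hpyth := Real.sin_sq_add_cos_sq (x / 2)
  have hcosx : Real.cos x = 1 - 2 * Real.sin (x / 2) ^ 2 := by
    have := Real.cos_two_mul (x / 2)
    have h2 : 2 * (x / 2) = x := by ring
    rw [h2] at this; nlinarith
  have hsinx : Real.sin x = 2 * Real.sin (x / 2) * Real.cos (x / 2) := by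
    have := Real.sin_two_mul (x / 2)
    have h2 : 2 * (x / 2) = x := by ring
    rw [h2] at this; linarith
  have hzre : z.re = Real.cos x := by simp [hzdef, Complex.exp_ofReal_mul_I_re]
  have hzim : z.im = Real.sin x := by simp [hzdef, Complex.exp_ofReal_mul_I_im]
  have hrepos : 0 < (1 - z).re := by
    rw [Complex.sub_re, Complex.one_re, hzre, hcosx]; nlinarith
  have hz1 : z ≠ 1 := by
    intro h
    rw [h] at hrepos; simp at hrepos
  have hzne : (1 : ℂ) - z ≠ 0 := by
    intro h; rw [h] at hrepos; simp at hrepos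
  have hznorm : ‖z‖ = 1 := by
    exact Complex.norm_exp_ofReal_mul_I x
  -- the key identity for 1 - z
  have hfactor : (1 : ℂ) - z =
      (2 * Real.sin (x / 2) : ℝ) *
        (Real.cos ((x - Real.pi) / 2) + Real.sin ((x - Real.pi) / 2) * Complex.I) := by
    have hc : Real.cos ((x - Real.pi) / 2) = Real.sin (x / 2) := by
      have : (x - Real.pi) / 2 = -(Real.pi / 2 - x / 2) := by ring
      rw [this, Real.cos_neg, Real.cos_pi_div_two_sub]
    have hsneg : Real.sin ((x - Real.pi) / 2) = -Real.cos (x / 2) := by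
      have : (x - Real.pi) / 2 = x / 2 - Real.pi / 2 := by ring
      rw [this, Real.sin_sub_pi_div_two]
    apply Complex.ext
    · simp only [Complex.sub_re, Complex.one_re, hzre, Complex.mul_re, Complex.add_re,
        Complex.ofReal_re, Complex.ofReal_im, Complex.mul_im, Complex.add_im,
        Complex.I_re, Complex.I_im, hc, hsneg]
      rw [hcosx]; ring
    · simp only [Complex.sub_im, Complex.one_im, hzim, Complex.mul_re, Complex.add_re,
        Complex.ofReal_re, Complex.ofReal_im, Complex.mul_im, Complex.add_im,
        Complex.I_re, Complex.I_im, hc, hsneg]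
      rw [hsinx]; ring
  have harg : Complex.arg (1 - z) = (x - Real.pi) / 2 := by
    have hpi := Real.pi_pos
    rw [hfactor, Complex.ofReal_cos, Complex.ofReal_sin, Complex.arg_real_mul _ (by positivity : (0:ℝ) < 2 * Real.sin (x/2)),
      Complex.arg_cos_add_sin_mul_I ⟨by linarith, by linarith⟩]
  -- the complex series
  set g : ℕ → ℂ := fun n => z ^ n / n with hgdef
  have hposn : 0 < ‖(1:ℂ) - z‖ := norm_pos_iff.mpr hzne
  have hb : ∀ n : ℕ, ‖∑ i ∈ range n, z ^ (i + 1)‖ ≤ 2 / ‖(1:ℂ) - z‖ := by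
    intro n
    have h0 : ∑ i ∈ range n, z ^ (i + 1) = z * ∑ i ∈ range n, z ^ i := by
      rw [Finset.mul_sum]; exact Finset.sum_congr rfl fun i _ => by ring
    rw [h0, geom_sum_eq hz1, norm_mul, hznorm, one_mul, norm_div]
    have h1 : ‖z ^ n - 1‖ ≤ 2 := by
      calc ‖z ^ n - 1‖ ≤ ‖z ^ n‖ + ‖(1:ℂ)‖ := norm_sub_le _ _
        _ = 2 := by rw [norm_pow, hznorm]; norm_num
    have h2 : ‖z - 1‖ = ‖(1:ℂ) - z‖ := by rw [← norm_neg]; ring_nf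
    rw [h2]
    gcongr
  have hanti : Antitone (fun n : ℕ => ((n : ℝ) + 1)⁻¹) := by
    intro a b hab
    have : (a : ℝ) + 1 ≤ (b : ℝ) + 1 := by exact_mod_cast by omega
    exact inv_anti₀ (by positivity) this
  have hf0 : Tendsto (fun n : ℕ => ((n : ℝ) + 1)⁻¹) atTop (𝓝 0) := by
    simpa [one_div] using tendsto_one_div_add_atTop_nhds_zero_nat (𝕜 := ℝ)
  have hcs : CauchySeq fun n => ∑ i ∈ range n, (((i : ℝ) + 1)⁻¹) • z ^ (i + 1) :=
    hanti.cauchySeq_series_mul_of_tendsto_zero_of_bounded hf0 hb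
  have hshift : ∀ n, ∑ i ∈ range (n + 1), g i
      = ∑ i ∈ range n, (((i : ℝ) + 1)⁻¹) • z ^ (i + 1) := by
    intro n
    rw [Finset.sum_range_succ']
    have hg0 : g 0 = 0 := by simp [hgdef]
    rw [hg0, add_zero]
    refine Finset.sum_congr rfl fun i _ => ?_
    rw [hgdef]
    simp only
    rw [Complex.real_smul]
    push_cast
    ring
  have hcs2 : CauchySeq fun n => ∑ i ∈ range n, g i := by
    rw [← cauchySeq_shift 1]
    simpa only [hshift] using hcs
  obtain ⟨l, hl⟩ := cauchySeq_tendsto_of_complete hcs2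
  -- Abel's limit theorem
  have habel := Complex.tendsto_tsum_powerSeries_nhdsWithin_lt (f := g) hl
  have hmemIoo : Set.Ioo (0:ℝ) 1 ∈ 𝓝[<] (1:ℝ) :=
    Ioo_mem_nhdsLT_of_mem (by norm_num : (1:ℝ) ∈ Set.Ioc (0:ℝ) 1)
  have hev : (fun w : ℂ => ∑' n, g n * w ^ n)
      =ᶠ[(𝓝[<] (1:ℝ)).map Complex.ofReal] fun w => -Complex.log (1 - w * z) := by
    rw [Filter.EventuallyEq, Filter.eventually_map]
    filter_upwards [hmemIoo] with r hr
    have hnorm : ‖(r : ℂ) * z‖ < 1 := by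
      rw [norm_mul, hznorm, mul_one, Complex.norm_real, Real.norm_eq_abs,
        abs_of_pos hr.1]
      exact hr.2
    rw [← (Complex.hasSum_taylorSeries_neg_log hnorm).tsum_eq]
    refine tsum_congr fun n => ?_
    rw [hgdef]
    simp only
    rw [mul_pow]
    ring
  have habel' := habel.congr' hev
  have hlog : Tendsto (fun w : ℂ => -Complex.log (1 - w * z))
      ((𝓝[<] (1:ℝ)).map Complex.ofReal) (𝓝 (-Complex.log (1 - z))) := by
    have hc : ContinuousAt (fun w : ℂ => -Complex.log (1 - w * z)) 1 := by
      have h2 : ContinuousAt (fun w : ℂ => 1 - w * z) 1 := by fun_prop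
      have h1 : ContinuousAt Complex.log (1 - z) := continuousAt_clog (Or.inl hrepos)
      have := ContinuousAt.comp (g := Complex.log) (f := fun w : ℂ => 1 - w * z)
        (x := 1) (by simpa only [one_mul] using h1) h2
      exact this.neg
    have hle : (𝓝[<] (1:ℝ)).map Complex.ofReal ≤ 𝓝 (1:ℂ) := by
      calc (𝓝[<] (1:ℝ)).map Complex.ofReal
          ≤ (𝓝 (1:ℝ)).map Complex.ofReal := map_mono nhdsWithin_le_nhds
        _ ≤ 𝓝 (1:ℂ) := Complex.continuous_ofReal.tendsto 1
    refine Tendsto.mono_left ?_ hle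
    have ht := hc.tendsto
    simpa using ht
  have hleq : l = -Complex.log (1 - z) := tendsto_nhds_unique habel' hlog
  have hlim : l.im = (Real.pi - x) / 2 := by
    rw [hleq, Complex.neg_im, Complex.log_im, harg]; ring
  have him : Tendsto (fun n => (∑ i ∈ range n, g i).im) atTop (𝓝 l.im) :=
    (Complex.continuous_im.tendsto l).comp hl
  rw [← hlim]
  have hcomp : Tendsto (fun N : ℕ => (∑ i ∈ range (N + 1), g i).im) atTop (𝓝 l.im) :=
    him.comp (tendsto_add_atTop_nat 1)
  have hterm : ∀ j : ℕ, (g j).im = Real.sin (j * x) / j := by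
    intro j
    have hzj : z ^ j = Complex.exp (((j : ℝ) * x : ℝ) * Complex.I) := by
      rw [hzdef, ← Complex.exp_nat_mul]
      push_cast
      ring_nf
    have h2 : g j = ((j : ℝ)⁻¹) • z ^ j := by
      rw [hgdef]
      simp only
      rw [Complex.real_smul]
      push_cast
      ring
    rw [h2, Complex.smul_im, hzj, Complex.exp_ofReal_mul_I_im, smul_eq_mul,
      inv_mul_eq_div]
  have hfun : ∀ N : ℕ, ∑ j ∈ Finset.Icc 1 N, Real.sin (j * x) / j
      = (∑ i ∈ range (N + 1), g i).im := by
    intro N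
    rw [Complex.im_sum]
    rw [Finset.range_eq_Ico, Finset.sum_eq_sum_Ico_succ_bot (Nat.succ_pos N),
      Nat.succ_eq_add_one, Finset.Ico_add_one_right_eq_Icc]
    have h0 : (g 0).im = 0 := by simp [hgdef]
    rw [h0, zero_add]
    exact Finset.sum_congr rfl fun j _ => (hterm j).symm
  simpa only [hfun] using hcomp
end
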